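/- Let a_j := i·e_j ∈ ℂ^{n+1} for j = 1,…,N with N ≤ n+1 (e_j the j-th standard basis vector), and let S_j := {z ∈ ℂ^{n+1} | (z − a_j)² = 1}. Then for any nonempty I ⊆ {1,…,N}, the intersection ⋂_{i∈I} S_i is homeomorphic to the complex (n−|I|+1)-sphere S_C^{n−|I|+1}. Concretely, with j₀ ∈ I fixed, ⋂_{i∈I} S_i = {z | z ∈ S_{j₀} and z_j = z_{j₀} for all j ∈ I∖{j₀}} after eliminating variables, and projection to the coordinates outside I∖{j₀} gives the homeomorphism. -/
import Mathlib

open Finset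

namespace Stmt3Aux

lemma expand {n N : ℕ} (hN : N ≤ n + 1) (z : Fin (n+1) → ℂ) (i : Fin N) :
    ∑ j, (z j - if (j:ℕ) = (i:ℕ) then Complex.I else 0)^2
      = (∑ j, z j ^ 2) - (2*Complex.I * z (Fin.castLE hN i) + 1) := by
  have h1 : ∀ j : Fin (n+1), (z j - if (j:ℕ) = (i:ℕ) then Complex.I else 0)^2
      = z j ^ 2 - (if j = Fin.castLE hN i then 2*Complex.I*z j + 1 else 0) := by
    intro j
    have hiff : ((j:ℕ) = (i:ℕ)) ↔ j = Fin.castLE hN i := by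
      rw [Fin.ext_iff]; simp [Fin.castLE]
    by_cases h : j = Fin.castLE hN i
    · rw [if_pos (hiff.2 h), if_pos h]
      ring_nf
      rw [Complex.I_sq]; ring
    · rw [if_neg (fun hh => h (hiff.1 hh)), if_neg h]; ring
  rw [Finset.sum_congr rfl (fun j _ => h1 j), Finset.sum_sub_distrib,
    Finset.sum_ite_eq' Finset.univ (Fin.castLE hN i) (fun j => 2*Complex.I*z j + 1)]
  simp

variable {n N : ℕ} (hN : N ≤ n + 1) (I : Finset (Fin N)) (j₀ : Fin N)

/-- coordinates constrained to be equal -/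
def Iset : Finset (Fin (n+1)) := I.image (Fin.castLE hN)

/-- free coordinates -/
def TT : Finset (Fin (n+1)) := (Iset hN I)ᶜ

lemma Iset_card : (Iset hN I).card = I.card :=
  Finset.card_image_of_injective _ (Fin.castLE_injective hN)

lemma TT_card : (TT hN I).card = n + 1 - I.card := by
  rw [TT, Finset.card_compl, Iset_card]; simp

include hN in
lemma card_le : I.card ≤ n + 1 :=
  le_trans (le_trans I.card_le_univ (by simp)) hN

/-- enumeration of free coordinates -/
noncomputable def ee : {x // x ∈ TT hN I} ≃ Fin (n + 1 - I.card) :=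
  (TT hN I).equivFin.trans (finCongr (TT_card hN I))

noncomputable def cc : ℂ := (Real.sqrt (2 - 1/I.card) : ℝ)
noncomputable def ss : ℂ := (Real.sqrt I.card : ℝ)

/-- embedding of Fin (n+1-k) into Fin (n+2-k) -/
def ι : Fin (n + 1 - I.card) → Fin (n + 2 - I.card) :=
  Fin.castLE (Nat.sub_le_sub_right (Nat.le_succ (n+1)) _)

/-- the last index -/
def LL : Fin (n + 2 - I.card) := ⟨n + 1 - I.card, by have := card_le hN I; omega⟩

noncomputable def F0 (z : Fin (n+1) → ℂ) : Fin (n + 2 - I.card) → ℂ := fun j =>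
  if h : (j : ℕ) < n + 1 - I.card then
    z ((ee hN I).symm ⟨(j : ℕ), h⟩ : {x // x ∈ TT hN I}) * (cc I)⁻¹
  else ss I * (z (Fin.castLE hN j₀) - Complex.I * (I.card : ℂ)⁻¹) * (cc I)⁻¹

noncomputable def G0 (w : Fin (n + 2 - I.card) → ℂ) : Fin (n+1) → ℂ := fun x =>
  if h : x ∈ TT hN I then cc I * w (ι I ((ee hN I) ⟨x, h⟩))
  else cc I * w (LL hN I) * (ss I)⁻¹ + Complex.I * (I.card : ℂ)⁻¹

variable (hI : I.Nonempty)


include hI in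
lemma hk0 : ((I.card : ℂ)) ≠ 0 := by
  have h := hI.card_pos
  exact Nat.cast_ne_zero.2 (by omega)

include hI in
lemma hkk : (I.card : ℂ) * (I.card : ℂ)⁻¹ = 1 := mul_inv_cancel₀ (hk0 I hI)

include hI in
lemma two_sub_pos : (0:ℝ) < 2 - 1/I.card := by
  have h1 := hI.card_pos
  rcases Nat.eq_zero_or_pos I.card with h | h
  · omega
  · have : (1:ℝ)/I.card ≤ 1 := by
      rw [div_le_one (by exact_mod_cast h)]
      exact_mod_cast h
    linarith

include hI in
lemma hc2 : (cc I)^2 = 2 - (I.card : ℂ)⁻¹ := by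
  rw [cc]
  rw [← Complex.ofReal_pow, Real.sq_sqrt (le_of_lt (two_sub_pos I hI))]
  push_cast
  rw [one_div]

include hI in
lemma hc0 : cc I ≠ 0 := by
  rw [cc]
  simp only [ne_eq, Complex.ofReal_eq_zero]
  exact Real.sqrt_ne_zero'.2 (two_sub_pos I hI)

include hI in
lemma hcc : cc I * (cc I)⁻¹ = 1 := mul_inv_cancel₀ (hc0 I hI)

include hI in
lemma hs2 : (ss I)^2 = (I.card : ℂ) := by
  rw [ss, ← Complex.ofReal_pow, Real.sq_sqrt (by positivity)]
  norm_num

include hI in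
lemma hs0 : ss I ≠ 0 := by
  rw [ss]
  simp only [ne_eq, Complex.ofReal_eq_zero]
  exact Real.sqrt_ne_zero'.2 (by exact_mod_cast hI.card_pos)

include hI in
lemma hss : ss I * (ss I)⁻¹ = 1 := mul_inv_cancel₀ (hs0 I hI)

lemma sum_split (w : Fin (n + 2 - I.card) → ℂ) :
    ∑ j, w j ^ 2 = (∑ i : Fin (n + 1 - I.card), w (ι I i) ^ 2) + w (LL hN I) ^ 2 := by
  have hm : n + 2 - I.card = (n + 1 - I.card) + 1 := by have := card_le hN I; omega
  rw [← Equiv.sum_comp (finCongr hm.symm) (fun j => w j ^ 2), Fin.sum_univ_castSucc]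
  have h1 : ∀ i : Fin (n + 1 - I.card), (finCongr hm.symm) i.castSucc = ι I i := by
    intro i; apply Fin.ext; simp [ι]
  have h2 : (finCongr hm.symm) (Fin.last (n + 1 - I.card)) = LL hN I := by
    apply Fin.ext; simp [LL]
  simp only [h1, h2]

lemma F0_apply_lt (z : Fin (n+1) → ℂ) (i : Fin (n + 1 - I.card)) :
    F0 hN I j₀ z (ι I i) = z ((ee hN I).symm i) * (cc I)⁻¹ := by
  unfold F0
  have h : ((ι I i : Fin (n + 2 - I.card)) : ℕ) < n + 1 - I.card := i.isLt
  rw [dif_pos h]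
  have h2 : (⟨((ι I i : Fin (n + 2 - I.card)) : ℕ), h⟩ : Fin (n + 1 - I.card)) = i :=
    Fin.ext (by simp [ι])
  rw [h2]

lemma F0_apply_last (z : Fin (n+1) → ℂ) :
    F0 hN I j₀ z (LL hN I) =
      ss I * (z (Fin.castLE hN j₀) - Complex.I * (I.card : ℂ)⁻¹) * (cc I)⁻¹ := by
  unfold F0 LL
  rw [dif_neg (by simp)]

lemma G0_apply_mem (w : Fin (n + 2 - I.card) → ℂ) (x : Fin (n+1)) (hx : x ∈ TT hN I) :
    G0 hN I w x = cc I * w (ι I ((ee hN I) ⟨x, hx⟩)) := by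
  unfold G0
  rw [dif_pos hx]

lemma G0_apply_not (w : Fin (n + 2 - I.card) → ℂ) (x : Fin (n+1)) (hx : x ∉ TT hN I) :
    G0 hN I w x = cc I * w (LL hN I) * (ss I)⁻¹ + Complex.I * (I.card : ℂ)⁻¹ := by
  unfold G0
  rw [dif_neg hx]

lemma j₀_not_mem (hj₀ : j₀ ∈ I) : Fin.castLE hN j₀ ∉ TT hN I := by
  simp only [TT, Finset.mem_compl, not_not, Iset, Finset.mem_image]
  exact ⟨j₀, hj₀, rfl⟩

include hI in
lemma F0_G0 (hj₀ : j₀ ∈ I) (w : Fin (n + 2 - I.card) → ℂ) :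
    F0 hN I j₀ (G0 hN I w) = w := by
  funext j
  by_cases h : (j : ℕ) < n + 1 - I.card
  · have hj : j = ι I ⟨(j : ℕ), h⟩ := Fin.ext (by simp [ι])
    rw [hj, F0_apply_lt]
    set x := (ee hN I).symm ⟨(j : ℕ), h⟩ with hxdef
    rw [G0_apply_mem hN I _ x.1 x.2]
    have h2 : (⟨x.1, x.2⟩ : {y // y ∈ TT hN I}) = x := rfl
    rw [h2, hxdef, Equiv.apply_symm_apply]
    linear_combination (w (ι I ⟨(j:ℕ), h⟩)) * hcc I hI
  · have hj : j = LL hN I := by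
      apply Fin.ext
      have h1 := j.isLt
      have h2 := card_le hN I
      simp only [LL]
      omega
    rw [hj, F0_apply_last, G0_apply_not hN I _ _ (j₀_not_mem hN I j₀ hj₀)]
    linear_combination (w (LL hN I) * cc I * (cc I)⁻¹) * hss I hI + w (LL hN I) * hcc I hI

include hI in
lemma G0_F0 (hj₀ : j₀ ∈ I) (z : Fin (n+1) → ℂ)
    (hz : ∀ j ∈ I, z (Fin.castLE hN j) = z (Fin.castLE hN j₀)) :
    G0 hN I (F0 hN I j₀ z) = z := by
  funext x
  by_cases hx : x ∈ TT hN I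
  · rw [G0_apply_mem hN I _ x hx, F0_apply_lt, Equiv.symm_apply_apply]
    linear_combination (z x) * hcc I hI
  · rw [G0_apply_not hN I _ x hx, F0_apply_last]
    have hxz : z x = z (Fin.castLE hN j₀) := by
      have hxm : x ∈ Iset hN I := by
        simpa only [TT, Finset.mem_compl, not_not] using hx
      obtain ⟨j, hj, rfl⟩ := Finset.mem_image.1 hxm
      exact hz j hj
    rw [hxz]
    linear_combination ((z (Fin.castLE hN j₀) - Complex.I*(I.card:ℂ)⁻¹) * cc I * (cc I)⁻¹) * hss I hI
      + (z (Fin.castLE hN j₀) - Complex.I*(I.card:ℂ)⁻¹) * hcc I hI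

lemma Iset_sum (hj₀ : j₀ ∈ I) (z : Fin (n+1) → ℂ)
    (hz : ∀ j ∈ I, z (Fin.castLE hN j) = z (Fin.castLE hN j₀)) :
    ∑ x ∈ Iset hN I, z x ^ 2 = (I.card : ℂ) * z (Fin.castLE hN j₀) ^ 2 := by
  have h1 : ∀ x ∈ Iset hN I, z x ^ 2 = z (Fin.castLE hN j₀) ^ 2 := by
    intro x hx
    obtain ⟨j, hj, rfl⟩ := Finset.mem_image.1 hx
    rw [hz j hj]
  rw [Finset.sum_congr rfl h1, Finset.sum_const, Iset_card, nsmul_eq_mul]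

lemma T_sum (f : Fin (n+1) → ℂ) :
    ∑ x ∈ TT hN I, f x = ∑ i : Fin (n + 1 - I.card), f ((ee hN I).symm i) := by
  rw [← Finset.sum_coe_sort (TT hN I) f,
    ← Equiv.sum_comp (ee hN I).symm (fun x : {x // x ∈ TT hN I} => f (x : Fin (n+1)))]

include hI in
lemma F0_mem (hj₀ : j₀ ∈ I) (z : Fin (n+1) → ℂ)
    (hz1 : ∑ j, (z j - if (j:ℕ) = (j₀:ℕ) then Complex.I else 0)^2 = 1)
    (hz2 : ∀ j ∈ I, z (Fin.castLE hN j) = z (Fin.castLE hN j₀)) :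
    ∑ j, (F0 hN I j₀ z j) ^ 2 = 1 := by
  rw [sum_split hN I]
  have e1 : ∀ i : Fin (n + 1 - I.card),
      F0 hN I j₀ z (ι I i) ^ 2 = z ((ee hN I).symm i) ^ 2 * ((cc I)⁻¹)^2 := by
    intro i; rw [F0_apply_lt]; ring
  rw [Finset.sum_congr rfl (fun i _ => e1 i), ← Finset.sum_mul,
    ← T_sum hN I (fun x => z x ^ 2), F0_apply_last]
  have htot : (∑ j, z j ^ 2) = (∑ x ∈ TT hN I, z x ^ 2) + (I.card : ℂ) * z (Fin.castLE hN j₀) ^ 2 := by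
    rw [← Finset.sum_add_sum_compl (Iset hN I) (fun x => z x ^ 2),
      Iset_sum hN I j₀ hj₀ z hz2, add_comm]
    rfl
  have hz1' : (∑ j, z j ^ 2) - (2*Complex.I*z (Fin.castLE hN j₀) + 1) = 1 := by
    rw [← expand hN z j₀]; exact hz1
  linear_combination ((((cc I)⁻¹)^2*(z (Fin.castLE hN j₀) - Complex.I*(I.card:ℂ)⁻¹)^2)) * hs2 I hI
    + ((cc I)⁻¹)^2 * hz1' - ((cc I)⁻¹)^2 * htot - ((cc I)⁻¹)^2 * hc2 I hI
    + (cc I*(cc I)⁻¹ + 1) * hcc I hI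
    + (-2*Complex.I*z (Fin.castLE hN j₀)*((cc I)⁻¹)^2
        + Complex.I^2*(I.card:ℂ)⁻¹*((cc I)⁻¹)^2) * hkk I hI
    + ((I.card:ℂ)⁻¹*((cc I)⁻¹)^2) * Complex.I_sq

lemma G0_eq (hj₀ : j₀ ∈ I) (w : Fin (n + 2 - I.card) → ℂ) :
    ∀ j ∈ I, G0 hN I w (Fin.castLE hN j) = G0 hN I w (Fin.castLE hN j₀) := by
  intro j hj
  rw [G0_apply_not hN I w _ (j₀_not_mem hN I j hj), G0_apply_not hN I w _ (j₀_not_mem hN I j₀ hj₀)]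

include hI in
lemma G0_sum (hj₀ : j₀ ∈ I) (w : Fin (n + 2 - I.card) → ℂ) (hw : ∑ j, w j ^ 2 = 1) :
    ∑ j, (G0 hN I w j - if (j:ℕ) = (j₀:ℕ) then Complex.I else 0)^2 = 1 := by
  rw [expand hN]
  have hT : ∑ x ∈ TT hN I, (G0 hN I w x)^2
      = (∑ i : Fin (n + 1 - I.card), w (ι I i)^2) * (cc I)^2 := by
    rw [T_sum hN I (fun x => (G0 hN I w x)^2)]
    have h1 : ∀ i ∈ (Finset.univ : Finset (Fin (n + 1 - I.card))),
        (G0 hN I w (((ee hN I).symm i : {y // y ∈ TT hN I}) : Fin (n+1)))^2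
          = w (ι I i)^2 * (cc I)^2 := by
      intro i _
      rw [G0_apply_mem hN I w _ ((ee hN I).symm i).2]
      have h2 : (⟨((ee hN I).symm i).1, ((ee hN I).symm i).2⟩ : {y // y ∈ TT hN I})
          = (ee hN I).symm i := rfl
      rw [h2, Equiv.apply_symm_apply]
      ring
    rw [Finset.sum_congr rfl h1, ← Finset.sum_mul]
  have hIs : ∑ x ∈ Iset hN I, (G0 hN I w x)^2
      = (I.card : ℂ) * (cc I * w (LL hN I) * (ss I)⁻¹ + Complex.I*(I.card:ℂ)⁻¹)^2 := by
    have h1 : ∀ x ∈ Iset hN I, (G0 hN I w x)^2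
        = (cc I * w (LL hN I) * (ss I)⁻¹ + Complex.I*(I.card:ℂ)⁻¹)^2 := by
      intro x hx
      rw [G0_apply_not hN I w x (by simp only [TT, Finset.mem_compl, not_not]; exact hx)]
    rw [Finset.sum_congr rfl h1, Finset.sum_const, Iset_card, nsmul_eq_mul]
  have hw' : ∑ i : Fin (n + 1 - I.card), w (ι I i)^2 = 1 - w (LL hN I)^2 := by
    have hsp := sum_split hN I w
    linear_combination hw - hsp
  have htot2 : ∑ j, (G0 hN I w j)^2
      = (I.card : ℂ) * (cc I * w (LL hN I) * (ss I)⁻¹ + Complex.I*(I.card:ℂ)⁻¹)^2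
        + (1 - w (LL hN I)^2) * (cc I)^2 := by
    rw [← Finset.sum_add_sum_compl (Iset hN I) (fun j => (G0 hN I w j)^2), hIs]
    congr 1
    have hc : (Iset hN I)ᶜ = TT hN I := rfl
    rw [hc, hT, hw']
  rw [htot2, G0_apply_not hN I w _ (j₀_not_mem hN I j₀ hj₀)]
  linear_combination hc2 I hI
    + ((cc I)^2*(w (LL hN I))^2*((ss I)⁻¹)^2 - 2*(cc I)^2*(w (LL hN I))^2*((ss I)⁻¹)^2) * hs2 I hI
    + ((cc I)^2*(w (LL hN I))^2*(ss I*(ss I)⁻¹+1)) * hss I hI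
    + (2*Complex.I*cc I*w (LL hN I)*(ss I)⁻¹ + Complex.I^2*(I.card:ℂ)⁻¹
        - 2*Complex.I^2*(I.card:ℂ)⁻¹ + (I.card:ℂ)⁻¹*(Complex.I^2-1)) * hkk I hI
    + ((I.card:ℂ)⁻¹*((I.card:ℂ)*(I.card:ℂ)⁻¹) - 2*(I.card:ℂ)⁻¹) * Complex.I_sq

lemma contF : Continuous (F0 hN I j₀) := by
  apply continuous_pi
  intro j
  unfold F0
  by_cases h : (j : ℕ) < n + 1 - I.card
  · simp only [dif_pos h]
    exact (continuous_apply _).mul continuous_const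
  · simp only [dif_neg h]
    exact (continuous_const.mul ((continuous_apply _).sub continuous_const)).mul continuous_const

lemma contG : Continuous (G0 hN I) := by
  apply continuous_pi
  intro x
  unfold G0
  by_cases h : x ∈ TT hN I
  · simp only [dif_pos h]
    exact continuous_const.mul (continuous_apply _)
  · simp only [dif_neg h]
    exact ((continuous_const.mul (continuous_apply _)).mul continuous_const).add continuous_const

noncomputable def theHomeo (hI : I.Nonempty) (hj₀ : j₀ ∈ I) :
    ({z : Fin (n+1) → ℂ | (∑ j, (z j - if (j:ℕ) = (j₀:ℕ) then Complex.I else 0)^2 = 1)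
        ∧ ∀ j ∈ I, z (Fin.castLE hN j) = z (Fin.castLE hN j₀)} : Set (Fin (n+1) → ℂ))
      ≃ₜ {w : Fin (n + 2 - I.card) → ℂ // ∑ j, w j ^ 2 = 1} where
  toFun z := ⟨F0 hN I j₀ z.1, F0_mem hN I j₀ hI hj₀ z.1 z.2.1 z.2.2⟩
  invFun w := ⟨G0 hN I w.1, ⟨G0_sum hN I j₀ hI hj₀ w.1 w.2, G0_eq hN I j₀ hj₀ w.1⟩⟩
  left_inv z := Subtype.ext (G0_F0 hN I j₀ hI hj₀ z.1 z.2.2)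
  right_inv w := Subtype.ext (F0_G0 hN I j₀ hI hj₀ w.1)
  continuous_toFun := ((contF hN I j₀).comp continuous_subtype_val).subtype_mk _
  continuous_invFun := ((contG hN I).comp continuous_subtype_val).subtype_mk _

end Stmt3Aux

namespace Stmt3Aux

lemma setEq {n N : ℕ} (hN : N ≤ n + 1) (I : Finset (Fin N)) (j₀ : Fin N) (hj₀ : j₀ ∈ I) :
    (⋂ i ∈ I, {z : Fin (n+1) → ℂ |
        ∑ j, (z j - if (j:ℕ) = (i:ℕ) then Complex.I else 0)^2 = 1}) =
    {z : Fin (n+1) → ℂ | (∑ j, (z j - if (j:ℕ) = (j₀:ℕ) then Complex.I else 0)^2 = 1)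
        ∧ ∀ j ∈ I, z (Fin.castLE hN j) = z (Fin.castLE hN j₀)} := by
  ext z
  simp only [Set.mem_iInter, Set.mem_setOf_eq, expand hN]
  constructor
  · intro h
    refine ⟨h j₀ hj₀, fun j hj => ?_⟩
    have h1 := h j hj
    have h2 := h j₀ hj₀
    have h3 : 2*Complex.I * z (Fin.castLE hN j) = 2*Complex.I * z (Fin.castLE hN j₀) := by
      linear_combination h2 - h1
    have h4 : (2*Complex.I : ℂ) ≠ 0 := by simp [Complex.I_ne_zero]
    exact mul_left_cancel₀ h4 h3
  · rintro ⟨h1, h2⟩ i hi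
    rw [h2 i hi]; exact h1

end Stmt3Aux

/-- Let `a_j := i·e_j ∈ ℂ^{n+1}` for `j = 1,…,N` with `N ≤ n+1`, and
`S_j := {z | (z − a_j)² = 1}`.  For any nonempty `I ⊆ {1,…,N}` and any fixed `j₀ ∈ I`,
the intersection `⋂_{i∈I} S_i` equals `{z ∈ S_{j₀} | z_j = z_{j₀} for all j ∈ I}`
(elimination of variables) and is homeomorphic to the complex unit
`(n−|I|+1)`-sphere `S_C^{n−|I|+1} ⊂ ℂ^{n−|I|+2}`. -/
theorem stmt_3 (n N : ℕ) (hN : N ≤ n + 1)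
    (I : Finset (Fin N)) (hI : I.Nonempty) (j₀ : Fin N) (hj₀ : j₀ ∈ I) :
    let a : Fin N → Fin (n + 1) → ℂ := fun i j => if (j : ℕ) = (i : ℕ) then Complex.I else 0
    let S : Fin N → Set (Fin (n + 1) → ℂ) := fun i => {z | ∑ j, (z j - a i j) ^ 2 = 1}
    (⋂ i ∈ I, S i) =
        {z | z ∈ S j₀ ∧ ∀ j ∈ I, z (Fin.castLE hN j) = z (Fin.castLE hN j₀)} ∧
      Nonempty ((⋂ i ∈ I, S i) ≃ₜ {w : Fin (n + 2 - I.card) → ℂ // ∑ j, w j ^ 2 = 1}) := by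
  intro a S
  have hset := Stmt3Aux.setEq hN I j₀ hj₀
  exact ⟨hset, ⟨(Homeomorph.setCongr hset).trans (Stmt3Aux.theHomeo hN I j₀ hI hj₀)⟩⟩
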